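/- Let (f, τ, c) be degree −2 branched covering data, and assume f is confluent and oriented. Let Y ⊆ ℂ be a continuum and let C be a connected component of f⁻¹(Y). Then T(C) is a connected component of f⁻¹(T(Y)) and f(T(C)) = T(Y). In particular, if Y is non-separating (ℂ \ Y is connected), then C is non-separating (ℂ \ C is connected). -/

import Mathlib

open Set Topology Bornology

/-- A continuum: a nonempty compact connected subset of ℂ. -/
def IsContinuum (K : Set ℂ) : Prop := IsCompact K ∧ IsConnected K

/-- The topological hull `T(Y)`: the complement of the unbounded connected
component of `ℂ \ Y`. -/
def hullC (Y : Set ℂ) : Set ℂ := {z | IsBounded (connectedComponentIn Yᶜ z)}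

/-- `C` is a connected component of the set `S`. -/
def IsComponentOf (C S : Set ℂ) : Prop := ∃ x ∈ S, C = connectedComponentIn S x

/-- A confluent map: each component of the preimage of a continuum maps onto it. -/
def Confluent (f : ℂ → ℂ) : Prop :=
  ∀ K C : Set ℂ, IsContinuum K → IsComponentOf C (f ⁻¹' K) → f '' C = K

open Metric

set_option linter.unusedSectionVars false

noncomputable section BranchedCoverAux


lemma bc_frontier_cci {S : Set ℂ} (hS : IsClosed S) (z : ℂ) :
    frontier (connectedComponentIn Sᶜ z) ⊆ S := by
  set V := connectedComponentIn Sᶜ z with hV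
  have hVo : IsOpen V := hS.isOpen_compl.connectedComponentIn
  intro y hy
  by_contra hyS
  have hyC : y ∈ Sᶜ := hyS
  have hyW : y ∈ connectedComponentIn Sᶜ y := mem_connectedComponentIn hyC
  have hWo : IsOpen (connectedComponentIn Sᶜ y) := hS.isOpen_compl.connectedComponentIn
  have hycl : y ∈ closure V := hy.1
  rcases mem_closure_iff.1 hycl _ hWo hyW with ⟨w, hwW, hwV⟩
  have h1 : connectedComponentIn Sᶜ y = connectedComponentIn Sᶜ w := connectedComponentIn_eq hwW
  have h2 : V = connectedComponentIn Sᶜ w := connectedComponentIn_eq hwV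
  have : y ∈ V := by rw [h2, ← h1]; exact hyW
  exact hy.2 (by rwa [hVo.interior_eq])

lemma bc_sout_preconnected {R : ℝ} (hR : 0 ≤ R) : IsPreconnected {z : ℂ | R < ‖z‖} := by
  set ρ : ℝ := R + 1 with hρ
  have hρpos : 0 < ρ := by linarith
  have hρR : R < ρ := by linarith
  have hsph : IsPreconnected (sphere (0:ℂ) ρ) := by
    refine (isConnected_sphere ?_ 0 hρpos.le).isPreconnected
    rw [Complex.rank_real_complex]; norm_num
  have hsub : sphere (0:ℂ) ρ ⊆ {z : ℂ | R < ‖z‖} := by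
    intro w hw
    have hww : ‖w‖ = ρ := mem_sphere_zero_iff_norm.1 hw
    show R < ‖w‖
    rw [hww]; exact hρR
  have key : {z : ℂ | R < ‖z‖} =
      ⋃₀ { T | ∃ z : ℂ, R < ‖z‖ ∧
        T = (fun t : ℝ => t • z) '' (Icc (min 1 (ρ/‖z‖)) (max 1 (ρ/‖z‖))) ∪ sphere (0:ℂ) ρ } := by
    apply subset_antisymm
    · intro z hz
      refine mem_sUnion.2 ⟨_, ⟨z, hz, rfl⟩, ?_⟩
      left
      exact ⟨1, ⟨min_le_left _ _, le_max_left _ _⟩, one_smul _ _⟩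
    · intro w hw
      rcases hw with ⟨T, ⟨z, hz, rfl⟩, hwT⟩
      have hznorm : 0 < ‖z‖ := lt_of_le_of_lt hR hz
      rcases hwT with h | h
      · rcases h with ⟨t, ⟨ht1, ht2⟩, rfl⟩
        have htpos : 0 < t := lt_of_lt_of_le (lt_min one_pos (div_pos hρpos hznorm)) ht1
        have hns : ‖t • z‖ = t * ‖z‖ := by
          rw [norm_smul, Real.norm_eq_abs, abs_of_pos htpos]
        show R < ‖t • z‖
        rw [hns]
        have hmin : min ‖z‖ ρ ≤ t * ‖z‖ := by
          rcases le_total 1 (ρ/‖z‖) with hc | hc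
          · have h1t : (1:ℝ) ≤ t := by rwa [min_eq_left hc] at ht1
            calc min ‖z‖ ρ ≤ ‖z‖ := min_le_left _ _
              _ = 1 * ‖z‖ := (one_mul _).symm
              _ ≤ t * ‖z‖ := by gcongr
          · have h1t : ρ/‖z‖ ≤ t := by rwa [min_eq_right hc] at ht1
            calc min ‖z‖ ρ ≤ ρ := min_le_right _ _
              _ = (ρ/‖z‖) * ‖z‖ := (div_mul_cancel₀ ρ hznorm.ne').symm
              _ ≤ t * ‖z‖ := by gcongr
        have : R < min ‖z‖ ρ := lt_min hz hρR
        linarith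
      · exact hsub h
  rw [key]
  refine isPreconnected_sUnion ((ρ:ℂ)) _ ?_ ?_
  · rintro T ⟨z, hz, rfl⟩
    right
    rw [mem_sphere_zero_iff_norm, Complex.norm_real, Real.norm_eq_abs, abs_of_pos hρpos]
  · rintro T ⟨z, hz, rfl⟩
    have hznorm : 0 < ‖z‖ := lt_of_le_of_lt hR hz
    have hseg : IsPreconnected ((fun t : ℝ => t • z) '' (Icc (min 1 (ρ/‖z‖)) (max 1 (ρ/‖z‖)))) :=
      isPreconnected_Icc.image _ (by fun_prop)
    apply IsPreconnected.union ((ρ/‖z‖) • z) _ _ hseg hsph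
    · exact ⟨ρ/‖z‖, ⟨min_le_right _ _, le_max_right _ _⟩, rfl⟩
    · have hn : ‖(ρ/‖z‖) • z‖ = ρ := by
        rw [norm_smul, Real.norm_eq_abs, abs_of_pos (div_pos hρpos hznorm),
          div_mul_cancel₀ ρ hznorm.ne']
      exact mem_sphere_zero_iff_norm.2 hn

lemma bc_sout_unbounded (R : ℝ) : ¬ IsBounded {z : ℂ | R < ‖z‖} := by
  intro h
  rcases h.subset_closedBall 0 with ⟨r, hr⟩
  set x : ℝ := max R r + 1 with hx
  have hxx : x ≤ ‖(x:ℂ)‖ := by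
    rw [Complex.norm_real, Real.norm_eq_abs]; exact le_abs_self x
  have h1 : R < ‖(x:ℂ)‖ := by
    have : R < x := by
      have := le_max_left R r; linarith
    linarith
  have h2 : ‖(x:ℂ)‖ ≤ r := by
    have := hr h1
    rwa [mem_closedBall, dist_zero_right] at this
  have : r < x := by have := le_max_right R r; linarith
  linarith

lemma bc_univ_unbounded : ¬ IsBounded (univ : Set ℂ) := by
  intro h
  exact bc_sout_unbounded 0 (h.subset (subset_univ _))


section HullLemmas

lemma bc_mem_hullC {S : Set ℂ} {z : ℂ} :
    z ∈ hullC S ↔ IsBounded (connectedComponentIn Sᶜ z) := Iff.rfl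

lemma bc_subset_hullC (S : Set ℂ) : S ⊆ hullC S := by
  intro z hz
  rw [bc_mem_hullC, connectedComponentIn_eq_empty (by simpa using hz)]
  exact isBounded_empty

lemma bc_hullC_mono {S T : Set ℂ} (h : S ⊆ T) : hullC S ⊆ hullC T := by
  intro z hz
  by_cases hzT : z ∈ T
  · exact bc_subset_hullC T hzT
  · rw [bc_mem_hullC]
    exact (bc_mem_hullC.1 hz).subset (connectedComponentIn_mono z (compl_subset_compl.2 h))

lemma bc_cci_subset_hullC {S : Set ℂ} {z : ℂ}
    (hb : IsBounded (connectedComponentIn Sᶜ z)) : connectedComponentIn Sᶜ z ⊆ hullC S := by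
  intro w hw
  rw [bc_mem_hullC, ← connectedComponentIn_eq hw]
  exact hb

lemma bc_sout_subset_cci {S : Set ℂ} {R : ℝ} (hR : 0 ≤ R) (hSR : S ⊆ closedBall 0 R) {z : ℂ}
    (hz : R < ‖z‖) : {w : ℂ | R < ‖w‖} ⊆ connectedComponentIn Sᶜ z := by
  apply (bc_sout_preconnected hR).subset_connectedComponentIn hz
  intro w hw hwS
  have := hSR hwS
  rw [mem_closedBall, dist_zero_right] at this
  exact absurd hw (not_lt.2 this)

lemma bc_hullC_subset_closedBall {S : Set ℂ} {R : ℝ} (hR : 0 ≤ R)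
    (h : S ⊆ closedBall 0 R) : hullC S ⊆ closedBall 0 R := by
  intro z hz
  rw [mem_closedBall, dist_zero_right]
  by_contra hzR
  push_neg at hzR
  have := (bc_mem_hullC.1 hz).subset (bc_sout_subset_cci hR h hzR)
  exact bc_sout_unbounded R this

lemma bc_isBounded_hullC {S : Set ℂ} (h : IsBounded S) : IsBounded (hullC S) := by
  rcases h.subset_closedBall 0 with ⟨r, hr⟩
  have hR : S ⊆ closedBall 0 (max r 0) :=
    hr.trans (closedBall_subset_closedBall (le_max_left _ _))
  exact (isBounded_closedBall).subset (bc_hullC_subset_closedBall (le_max_right _ _) hR)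

lemma bc_not_mem_hullC_compl {S : Set ℂ} {z : ℂ} (hz : z ∉ hullC S) :
    z ∈ Sᶜ ∧ ¬ IsBounded (connectedComponentIn Sᶜ z) := by
  refine ⟨fun hzS => hz (bc_subset_hullC S hzS), fun hb => hz (bc_mem_hullC.2 hb)⟩

lemma bc_isClosed_hullC {S : Set ℂ} (hS : IsClosed S) : IsClosed (hullC S) := by
  rw [← isOpen_compl_iff, isOpen_iff_forall_mem_open]
  intro z hz
  obtain ⟨hzc, hub⟩ := bc_not_mem_hullC_compl hz
  refine ⟨connectedComponentIn Sᶜ z, ?_, hS.isOpen_compl.connectedComponentIn,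
    mem_connectedComponentIn hzc⟩
  intro w hw hwh
  rw [bc_mem_hullC, ← connectedComponentIn_eq hw] at hwh
  exact hub hwh

lemma bc_hullC_idem {S : Set ℂ} : hullC (hullC S) = hullC S := by
  apply subset_antisymm
  · intro z hz
    by_contra hzS
    obtain ⟨hzc, hub⟩ := bc_not_mem_hullC_compl hzS
    have hsub : connectedComponentIn Sᶜ z ⊆ (hullC S)ᶜ := by
      intro w hw
      intro hwh
      rw [bc_mem_hullC, ← connectedComponentIn_eq hw] at hwh
      exact hub hwh
    have : connectedComponentIn Sᶜ z ⊆ connectedComponentIn (hullC S)ᶜ z :=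
      isPreconnected_connectedComponentIn.subset_connectedComponentIn
        (mem_connectedComponentIn hzc) hsub
    exact hub ((bc_mem_hullC.1 hz).subset this)
  · exact bc_subset_hullC _

lemma bc_frontier_nonempty {V : Set ℂ} (hVo : IsOpen V) (hVne : V.Nonempty)
    (hVb : IsBounded V) : (frontier V).Nonempty := by
  by_contra h
  rw [not_nonempty_iff_eq_empty] at h
  have hcl : IsClosed V := by
    have : closure V = V := by
      have := closure_eq_interior_union_frontier V
      rw [h, union_empty, hVo.interior_eq] at this
      exact this
    rw [← this]; exact isClosed_closure
  rcases isClopen_iff.1 ⟨hcl, hVo⟩ with h1 | h1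
  · exact hVne.ne_empty h1
  · rw [h1] at hVb; exact bc_univ_unbounded hVb

lemma bc_isConnected_hullC {S : Set ℂ} (hS : IsCompact S) (hconn : IsConnected S) :
    IsConnected (hullC S) := by
  obtain ⟨s₀, hs₀⟩ := hconn.nonempty
  refine ⟨⟨s₀, bc_subset_hullC S hs₀⟩, ?_⟩
  have key : hullC S = ⋃₀ (insert S
      { T | ∃ z ∈ hullC S \ S, T = S ∪ closure (connectedComponentIn Sᶜ z) }) := by
    apply subset_antisymm
    · intro z hz
      by_cases hzS : z ∈ S
      · exact mem_sUnion.2 ⟨S, mem_insert _ _, hzS⟩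
      · refine mem_sUnion.2 ⟨_, mem_insert_of_mem _ ⟨z, ⟨hz, hzS⟩, rfl⟩, ?_⟩
        right
        exact subset_closure (mem_connectedComponentIn hzS)
    · intro w hw
      rcases hw with ⟨T, hT, hwT⟩
      rcases hT with hTS | ⟨z, ⟨hzh, hzS⟩, rfl⟩
      · exact bc_subset_hullC S (hTS ▸ hwT)
      · rcases hwT with h | h
        · exact bc_subset_hullC S h
        · have hVo : IsOpen (connectedComponentIn Sᶜ z) :=
            hS.isClosed.isOpen_compl.connectedComponentIn
          have : closure (connectedComponentIn Sᶜ z) ⊆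
              connectedComponentIn Sᶜ z ∪ S := by
            rw [closure_eq_interior_union_frontier, hVo.interior_eq]
            exact union_subset_union_right _ (bc_frontier_cci hS.isClosed z)
          rcases this h with h1 | h1
          · exact bc_cci_subset_hullC (bc_mem_hullC.1 hzh) h1
          · exact bc_subset_hullC S h1
  rw [key]
  refine isPreconnected_sUnion s₀ _ ?_ ?_
  · rintro T (rfl | ⟨z, hz, rfl⟩)
    · exact hs₀
    · exact Or.inl hs₀
  · rintro T (rfl | ⟨z, ⟨hzh, hzS⟩, rfl⟩)
    · exact hconn.isPreconnected
    · have hVo : IsOpen (connectedComponentIn Sᶜ z) :=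
        hS.isClosed.isOpen_compl.connectedComponentIn
      have hVne : (connectedComponentIn Sᶜ z).Nonempty := ⟨z, mem_connectedComponentIn hzS⟩
      have hVb : IsBounded (connectedComponentIn Sᶜ z) := bc_mem_hullC.1 hzh
      obtain ⟨y, hy⟩ := bc_frontier_nonempty hVo hVne hVb
      have hyS : y ∈ S := bc_frontier_cci hS.isClosed z hy
      have hycl : y ∈ closure (connectedComponentIn Sᶜ z) := hy.1
      exact IsPreconnected.union y hyS hycl hconn.isPreconnected
        isPreconnected_connectedComponentIn.closure

lemma bc_comp_eq_self {S : Set ℂ} (hS : IsPreconnected S) {x : ℂ} (hx : x ∈ S) :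
    connectedComponentIn S x = S :=
  subset_antisymm (connectedComponentIn_subset _ _)
    (hS.subset_connectedComponentIn hx subset_rfl)

lemma bc_isConnected_compl_of_unbounded {S : Set ℂ} (hS : IsBounded S)
    (h : ∀ z ∉ S, ¬ IsBounded (connectedComponentIn Sᶜ z)) : IsConnected Sᶜ := by
  rcases hS.subset_closedBall 0 with ⟨r, hr⟩
  set R := max r 0 with hR
  have hR0 : 0 ≤ R := le_max_right _ _
  have hSR : S ⊆ closedBall 0 R := hr.trans (closedBall_subset_closedBall (le_max_left _ _))
  set z₁ : ℂ := ((R+1 : ℝ) : ℂ) with hz₁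
  have hz₁n : R < ‖z₁‖ := by
    rw [hz₁, Complex.norm_real, Real.norm_eq_abs, abs_of_nonneg (by linarith)]
    linarith
  have hz₁c : z₁ ∈ Sᶜ := by
    intro hmem
    have := hSR hmem
    rw [mem_closedBall, dist_zero_right] at this
    exact absurd hz₁n (not_lt.2 this)
  have main : ∀ z ∈ Sᶜ, z ∈ connectedComponentIn Sᶜ z₁ := by
    intro z hzc
    have hub := h z hzc
    have hex : ∃ p ∈ connectedComponentIn Sᶜ z, R < ‖p‖ := by
      by_contra hcon
      push_neg at hcon
      exact hub ((isBounded_closedBall (x := (0:ℂ)) (r := R)).subset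
        (fun p hp => by rw [mem_closedBall, dist_zero_right]; exact hcon p hp))
    obtain ⟨p, hp, hpR⟩ := hex
    have h1 : connectedComponentIn Sᶜ z = connectedComponentIn Sᶜ p := connectedComponentIn_eq hp
    have h2 : z₁ ∈ connectedComponentIn Sᶜ p := bc_sout_subset_cci hR0 hSR hpR hz₁n
    have h3 : connectedComponentIn Sᶜ p = connectedComponentIn Sᶜ z₁ := connectedComponentIn_eq h2
    rw [← h3, ← h1]
    exact mem_connectedComponentIn hzc
  have : Sᶜ = connectedComponentIn Sᶜ z₁ :=
    subset_antisymm main (connectedComponentIn_subset _ _)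
  rw [this]
  exact ⟨⟨z₁, mem_connectedComponentIn hz₁c⟩, isPreconnected_connectedComponentIn⟩

lemma bc_hullC_eq_self_of_compl_connected {S : Set ℂ} (hSb : IsBounded S)
    (hco : IsConnected Sᶜ) : hullC S = S := by
  apply subset_antisymm _ (bc_subset_hullC S)
  intro z hz
  by_contra hzS
  have hcc : connectedComponentIn Sᶜ z = Sᶜ := bc_comp_eq_self hco.isPreconnected hzS
  rw [bc_mem_hullC, hcc] at hz
  rcases hSb.subset_closedBall 0 with ⟨r, hr⟩
  have : {w : ℂ | max r 0 < ‖w‖} ⊆ Sᶜ := by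
    intro w hw hwS
    have := hr hwS
    rw [mem_closedBall, dist_zero_right] at this
    exact absurd (lt_of_le_of_lt (le_max_left r 0) hw) (not_lt.2 this)
  exact bc_sout_unbounded (max r 0) (hz.subset this)

end HullLemmas

section Invol

variable {τ : ℂ → ℂ} (hτ : Continuous τ) (hττ : ∀ x, τ (τ x) = x)
include hτ hττ

lemma bc_invol_image_image (S : Set ℂ) : τ '' (τ '' S) = S := by
  rw [← image_comp]
  have : τ ∘ τ = id := funext hττ
  rw [this, image_id]

lemma bc_invol_mem_image {S : Set ℂ} {w : ℂ} : w ∈ τ '' S ↔ τ w ∈ S := by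
  constructor
  · rintro ⟨u, hu, rfl⟩; rwa [hττ]
  · intro h; exact ⟨τ w, h, hττ w⟩

lemma bc_invol_image_compl (S : Set ℂ) : (τ '' S)ᶜ = τ '' Sᶜ := by
  ext w
  rw [mem_compl_iff, bc_invol_mem_image hτ hττ, bc_invol_mem_image hτ hττ, mem_compl_iff]

lemma bc_invol_bounded {S : Set ℂ} (h : IsBounded S) : IsBounded (τ '' S) := by
  have h1 : IsCompact (closure S) := Metric.isCompact_of_isClosed_isBounded isClosed_closure h.closure
  have h2 : IsCompact (τ '' closure S) := h1.image hτ
  exact h2.isBounded.subset (image_mono (f := τ) subset_closure)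

lemma bc_invol_cci_aux (F : Set ℂ) (x : ℂ) :
    τ '' connectedComponentIn F x ⊆ connectedComponentIn (τ '' F) (τ x) := by
  by_cases hx : x ∈ F
  · apply IsPreconnected.subset_connectedComponentIn
    · exact isPreconnected_connectedComponentIn.image τ hτ.continuousOn
    · exact ⟨x, mem_connectedComponentIn hx, rfl⟩
    · exact image_mono (f := τ) (connectedComponentIn_subset _ _)
  · rw [connectedComponentIn_eq_empty hx, image_empty]
    exact empty_subset _

lemma bc_invol_cci (F : Set ℂ) (x : ℂ) :
    τ '' connectedComponentIn F x = connectedComponentIn (τ '' F) (τ x) := by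
  apply subset_antisymm (bc_invol_cci_aux hτ hττ F x)
  have h1 := bc_invol_cci_aux hτ hττ (τ '' F) (τ x)
  rw [bc_invol_image_image hτ hττ, hττ] at h1
  have h2 := image_mono (f := τ) h1
  rwa [bc_invol_image_image hτ hττ] at h2

lemma bc_invol_hullC (S : Set ℂ) : τ '' hullC S = hullC (τ '' S) := by
  ext w
  rw [bc_invol_mem_image hτ hττ, bc_mem_hullC, bc_mem_hullC,
    bc_invol_image_compl hτ hττ]
  have : connectedComponentIn (τ '' Sᶜ) w = τ '' connectedComponentIn Sᶜ (τ w) := by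
    rw [bc_invol_cci hτ hττ, hττ]
  rw [this]
  constructor
  · exact bc_invol_bounded hτ hττ
  · intro h
    have := bc_invol_bounded hτ hττ h
    rwa [bc_invol_image_image hτ hττ] at this

end Invol

section FMap

variable {f : ℂ → ℂ} (hf : Continuous f) (hopen : IsOpenMap f)
  (hperfect : ∀ K : Set ℂ, IsCompact K → IsCompact (f ⁻¹' K))
include hf hperfect

lemma bc_f_proper : IsProperMap f :=
  isProperMap_iff_isCompact_preimage.2 ⟨hf, fun K hK => hperfect K hK⟩

lemma bc_f_closedMap : IsClosedMap f := (bc_f_proper hf hperfect).isClosedMap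

include hopen in
lemma bc_f_surj : Function.Surjective f := by
  have h1 : IsClopen (range f) :=
    ⟨(bc_f_closedMap hf hperfect).isClosed_range, hopen.isOpen_range⟩
  have h2 : range f = univ := h1.eq_univ ⟨f 0, mem_range_self 0⟩
  exact range_eq_univ.1 h2

lemma bc_image_bounded_iff {V : Set ℂ} : IsBounded (f '' V) ↔ IsBounded V := by
  constructor
  · intro h
    have hcl : IsCompact (closure (f '' V)) :=
      Metric.isCompact_of_isClosed_isBounded isClosed_closure h.closure
    have : V ⊆ f ⁻¹' (closure (f '' V)) := fun x hx => subset_closure (mem_image_of_mem f hx)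
    exact (hperfect _ hcl).isBounded.subset this
  · intro h
    have hcl : IsCompact (closure V) :=
      Metric.isCompact_of_isClosed_isBounded isClosed_closure h.closure
    exact (hcl.image hf).isBounded.subset (image_mono (f := f) subset_closure)

include hopen in
lemma bc_image_cci_compl {S : Set ℂ} (hS : IsClosed S) {z : ℂ} (hz : f z ∉ S) :
    f '' connectedComponentIn (f ⁻¹' S)ᶜ z = connectedComponentIn Sᶜ (f z) := by
  have hzV : z ∈ (f ⁻¹' S)ᶜ := hz
  set V := connectedComponentIn (f ⁻¹' S)ᶜ z with hVdef
  have hVo : IsOpen V := (hS.preimage hf).isOpen_compl.connectedComponentIn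
  have hzmV : z ∈ V := mem_connectedComponentIn hzV
  have h1 : f '' V ⊆ Sᶜ := by
    rintro - ⟨x, hx, rfl⟩
    exact (connectedComponentIn_subset ((f ⁻¹' S)ᶜ) z) hx
  have hclsub : closure (f '' V) ⊆ f '' closure V :=
    closure_minimal (image_mono (f := f) subset_closure)
      ((bc_f_closedMap hf hperfect) _ isClosed_closure)
  have hclV : closure V ⊆ V ∪ f ⁻¹' S := by
    rw [closure_eq_interior_union_frontier, hVo.interior_eq]
    exact union_subset_union_right _ (bc_frontier_cci (hS.preimage hf) z)
  have h2 : closure (f '' V) ∩ Sᶜ ⊆ f '' V := by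
    rintro y ⟨hy1, hy2⟩
    rcases hclsub hy1 with ⟨x, hx, rfl⟩
    rcases hclV hx with h | h
    · exact mem_image_of_mem f h
    · exact absurd h hy2
  have h3 : f '' V ⊆ connectedComponentIn Sᶜ (f z) := by
    apply IsPreconnected.subset_connectedComponentIn
    · exact isPreconnected_connectedComponentIn.image f hf.continuousOn
    · exact mem_image_of_mem f hzmV
    · exact h1
  have h4 : connectedComponentIn Sᶜ (f z) ⊆ f '' V := by
    apply IsPreconnected.subset_left_of_subset_union (hopen V hVo)
      isClosed_closure.isOpen_compl
    · exact disjoint_compl_right.mono_left subset_closure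
    · intro w hw
      by_cases hwf : w ∈ f '' V
      · exact Or.inl hwf
      · right
        intro hwcl
        exact hwf (h2 ⟨hwcl, connectedComponentIn_subset _ _ hw⟩)
    · exact ⟨f z, mem_connectedComponentIn hz, mem_image_of_mem f hzmV⟩
    · exact isPreconnected_connectedComponentIn
  exact subset_antisymm h3 h4

include hopen in
lemma bc_preimage_hullC {S : Set ℂ} (hS : IsClosed S) :
    f ⁻¹' (hullC S) = hullC (f ⁻¹' S) := by
  ext z
  by_cases hz : z ∈ f ⁻¹' S
  · constructor
    · intro _
      exact bc_subset_hullC _ hz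
    · intro _
      exact bc_subset_hullC S hz
  · rw [mem_preimage, bc_mem_hullC, bc_mem_hullC,
      ← bc_image_cci_compl hf hopen hperfect hS hz,
      bc_image_bounded_iff hf hperfect]

end FMap



section LogMachinery

lemma bc_slit_of_close {w : ℂ} (h : ‖w - 1‖ < 1) : w ∈ Complex.slitPlane := by
  rw [Complex.mem_slitPlane_iff]
  left
  have h1 : |(w - 1).re| ≤ ‖w - 1‖ := by
    exact Complex.abs_re_le_norm _
  have h2 : (w - 1).re = w.re - 1 := by simp
  have h3 := (abs_le.1 h1).1
  rw [h2] at h3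
  linarith

lemma bc_prod_telescope_up (b : ℕ → ℂ) :
    ∀ N : ℕ, (∀ k, k ≤ N → b k ≠ 0) → ∏ k ∈ Finset.range N, b (k+1) / b k = b N / b 0 := by
  intro N
  induction N with
  | zero => intro h; simp [div_self (h 0 le_rfl)]
  | succ N ih =>
    intro h
    rw [Finset.prod_range_succ, ih (fun k hk => h k (hk.trans (Nat.le_succ N)))]
    have h0' := h 0 (Nat.zero_le _)
    have hN' := h N (Nat.le_succ N)
    have hN1' := h (N+1) le_rfl
    field_simp
    try ring

lemma bc_prod_telescope_down (b : ℕ → ℂ) :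
    ∀ N : ℕ, (∀ k, k ≤ N → b k ≠ 0) → ∏ k ∈ Finset.range N, b k / b (k+1) = b 0 / b N := by
  intro N
  induction N with
  | zero => intro h; simp [div_self (h 0 le_rfl)]
  | succ N ih =>
    intro h
    rw [Finset.prod_range_succ, ih (fun k hk => h k (hk.trans (Nat.le_succ N)))]
    have h0' := h 0 (Nat.zero_le _)
    have hN' := h N (Nat.le_succ N)
    have hN1' := h (N+1) le_rfl
    field_simp
    try ring

/-- No continuous retraction-like map: `F` continuous, identity on the circle of radius `R`,
cannot avoid `0` on the closed disk. -/
lemma bc_no_retraction {F : ℂ → ℂ} (hF : Continuous F) {R : ℝ} (hR : 0 < R)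
    (hid : ∀ z : ℂ, ‖z‖ = R → F z = z) (h0 : ∀ z : ℂ, ‖z‖ ≤ R → F z ≠ 0) : False := by
  classical
  set e : ℝ → ℂ := fun θ => Complex.exp (((2 * Real.pi * θ : ℝ) : ℂ) * Complex.I) with he
  have he_cont : Continuous e := by
    apply Complex.continuous_exp.comp
    exact (Complex.continuous_ofReal.comp (by continuity)).mul continuous_const
  have he_norm : ∀ θ, ‖e θ‖ = 1 := fun θ => by
    rw [he]; exact Complex.norm_exp_ofReal_mul_I _
  have he0 : e 0 = 1 := by simp [he]
  have he1 : e 1 = 1 := by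
    show Complex.exp (((2 * Real.pi * 1 : ℝ) : ℂ) * Complex.I) = 1
    have h : ((2 * Real.pi * 1 : ℝ) : ℂ) * Complex.I = 2 * (Real.pi : ℂ) * Complex.I := by
      push_cast; ring
    rw [h, Complex.exp_two_pi_mul_I]
  set u : ℝ × ℝ → ℂ := fun q => F (((q.1 * R : ℝ) : ℂ) * e q.2) with hu
  have hu_cont : Continuous u := by
    apply hF.comp
    exact (Complex.continuous_ofReal.comp (by continuity)).mul (he_cont.comp continuous_snd)
  set Q : Set (ℝ × ℝ) := Icc (0:ℝ) 1 ×ˢ Icc (0:ℝ) 1 with hQ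
  have hQcomp : IsCompact Q := isCompact_Icc.prod isCompact_Icc
  have hQne : Q.Nonempty := ⟨(0,0), by simp [hQ, left_mem_Icc]⟩
  have harg : ∀ q : ℝ × ℝ, q ∈ Q → ‖((q.1 * R : ℝ) : ℂ) * e q.2‖ ≤ R := by
    rintro ⟨s, θ⟩ ⟨⟨hs0, hs1⟩, -⟩
    rw [norm_mul, he_norm, mul_one, Complex.norm_real, Real.norm_eq_abs,
      abs_of_nonneg (by positivity)]
    nlinarith
  have hu_ne : ∀ q ∈ Q, u q ≠ 0 := fun q hq => h0 _ (harg q hq)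
  obtain ⟨q₀, hq₀Q, hq₀min⟩ := hQcomp.exists_isMinOn hQne (continuous_norm.comp hu_cont).continuousOn
  set ε : ℝ := ‖u q₀‖ with hε
  have hεpos : 0 < ε := norm_pos_iff.2 (hu_ne q₀ hq₀Q)
  have hmin : ∀ q ∈ Q, ε ≤ ‖u q‖ := fun q hq => hq₀min hq
  obtain ⟨δ, hδpos, hδ⟩ := Metric.uniformContinuousOn_iff.1
    (hQcomp.uniformContinuousOn_of_continuous hu_cont.continuousOn) ε hεpos
  obtain ⟨n₀, hn₀⟩ := exists_nat_one_div_lt hδpos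
  set N : ℕ := n₀ + 2 with hN
  have hNpos : (0:ℝ) < N := by positivity
  have hNne : (N:ℝ) ≠ 0 := hNpos.ne'
  have hNlt : 1 / (N:ℝ) < δ := by
    apply lt_of_le_of_lt _ hn₀
    apply one_div_le_one_div_of_le (by positivity)
    rw [hN]; push_cast; linarith
  have hmemQ : ∀ s ∈ Icc (0:ℝ) 1, ∀ k : ℕ, k ≤ N → (s, (k:ℝ)/N) ∈ Q := by
    intro s hs k hk
    refine ⟨hs, ⟨by positivity, ?_⟩⟩
    rw [div_le_one hNpos]
    exact_mod_cast hk
  have hpair : ∀ s ∈ Icc (0:ℝ) 1, ∀ k : ℕ, k < N →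
      ‖u (s, ((k+1 : ℕ):ℝ)/N) - u (s, (k:ℝ)/N)‖ < ε := by
    intro s hs k hk
    rw [← dist_eq_norm]
    apply hδ _ (hmemQ s hs (k+1) hk) _ (hmemQ s hs k hk.le)
    rw [Prod.dist_eq]
    have h1 : dist s s = 0 := dist_self s
    have h2 : dist (((k+1:ℕ):ℝ)/N) ((k:ℝ)/N) = 1/N := by
      rw [Real.dist_eq]
      have : ((k+1:ℕ):ℝ)/N - (k:ℝ)/N = 1/N := by push_cast; field_simp; ring
      rw [this, abs_of_pos (by positivity)]
    rw [h1, h2]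
    simpa using hNlt
  -- the discrete winding sum
  set d : ℝ → ℂ := fun s =>
    ∑ k ∈ Finset.range N, Complex.log (u (s, ((k+1:ℕ):ℝ)/N) / u (s, (k:ℝ)/N)) with hd
  have hratio_ne : ∀ s ∈ Icc (0:ℝ) 1, ∀ k : ℕ, k ≤ N → u (s, (k:ℝ)/N) ≠ 0 :=
    fun s hs k hk => hu_ne _ (hmemQ s hs k hk)
  have hratio_slit : ∀ s ∈ Icc (0:ℝ) 1, ∀ k : ℕ, k < N →
      u (s, ((k+1:ℕ):ℝ)/N) / u (s, (k:ℝ)/N) ∈ Complex.slitPlane := by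
    intro s hs k hk
    apply bc_slit_of_close
    rw [div_sub_one (hratio_ne s hs k hk.le), norm_div]
    rw [div_lt_one (norm_pos_iff.2 (hratio_ne s hs k hk.le))]
    exact lt_of_lt_of_le (hpair s hs k hk) (hmin _ (hmemQ s hs k hk.le))
  have hd_cont : ContinuousOn d (Icc (0:ℝ) 1) := by
    apply continuousOn_finset_sum
    intro k hk
    rw [Finset.mem_range] at hk
    have hc1 : Continuous (fun s : ℝ => u (s, ((k+1:ℕ):ℝ)/N)) :=
      hu_cont.comp (continuous_id.prodMk continuous_const)
    have hc2 : Continuous (fun s : ℝ => u (s, (k:ℝ)/N)) :=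
      hu_cont.comp (continuous_id.prodMk continuous_const)
    apply ContinuousOn.clog
    · exact (hc1.continuousOn).div hc2.continuousOn (fun s hs => hratio_ne s hs k hk.le)
    · exact fun s hs => hratio_slit s hs k hk
  have hexp : ∀ s ∈ Icc (0:ℝ) 1, Complex.exp (d s) = 1 := by
    intro s hs
    rw [hd, Complex.exp_sum]
    have : ∀ k ∈ Finset.range N,
        Complex.exp (Complex.log (u (s, ((k+1:ℕ):ℝ)/N) / u (s, (k:ℝ)/N))) =
        u (s, ((k+1:ℕ):ℝ)/N) / u (s, (k:ℝ)/N) := by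
      intro k hk
      rw [Finset.mem_range] at hk
      exact Complex.exp_log (div_ne_zero (hratio_ne s hs (k+1) hk) (hratio_ne s hs k hk.le))
    rw [Finset.prod_congr rfl this]
    rw [bc_prod_telescope_up (fun k => u (s, (k:ℝ)/N)) N (fun k hk => hratio_ne s hs k hk)]
    have hNN : ((N:ℝ)/N) = 1 := div_self hNne
    have h00 : ((0:ℕ):ℝ)/N = 0 := by simp
    rw [hNN, h00]
    have : u (s, 1) = u (s, 0) := by
      rw [hu]; simp only; rw [he1, he0]
    rw [this, div_self (by rw [← h00]; exact hratio_ne s hs 0 (Nat.zero_le N))]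
  have hd0 : d 0 = 0 := by
    rw [hd]
    apply Finset.sum_eq_zero
    intro k hk
    have : ∀ θ : ℝ, u (0, θ) = F 0 := by
      intro θ
      rw [hu]; simp
    rw [this, this, div_self (h0 0 (by simp [hR.le]) ), Complex.log_one]
  have hd1 : d 1 = ((2 * Real.pi : ℝ) : ℂ) * Complex.I := by
    show (∑ k ∈ Finset.range N, Complex.log (u (1, ((k+1:ℕ):ℝ)/N) / u (1, (k:ℝ)/N))) =
      ((2 * Real.pi : ℝ) : ℂ) * Complex.I
    have hterm : ∀ k ∈ Finset.range N,
        Complex.log (u (1, ((k+1:ℕ):ℝ)/N) / u (1, (k:ℝ)/N)) =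
        ((2 * Real.pi / N : ℝ) : ℂ) * Complex.I := by
      intro k hk
      rw [Finset.mem_range] at hk
      have hu1 : ∀ t : ℝ, t ∈ Icc (0:ℝ) 1 → u (1, t) = ((R:ℝ):ℂ) * e t := by
        intro t ht
        rw [hu]; simp only [one_mul]
        apply hid
        rw [norm_mul, he_norm, mul_one, Complex.norm_real, Real.norm_eq_abs, abs_of_pos hR]
      have hk1 : (((k+1:ℕ):ℝ)/N) ∈ Icc (0:ℝ) 1 := by
        constructor
        · positivity
        · rw [div_le_one hNpos]; exact_mod_cast hk
      have hk0 : ((k:ℝ)/N) ∈ Icc (0:ℝ) 1 := by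
        constructor
        · positivity
        · rw [div_le_one hNpos]; exact_mod_cast hk.le
      rw [hu1 _ hk1, hu1 _ hk0]
      have hRne : ((R:ℝ):ℂ) ≠ 0 := by
        simpa using hR.ne'
      rw [mul_div_mul_left _ _ hRne]
      have hee : e (((k+1:ℕ):ℝ)/N) / e ((k:ℝ)/N) =
          Complex.exp (((2 * Real.pi / N : ℝ) : ℂ) * Complex.I) := by
        rw [he]
        simp only
        rw [← Complex.exp_sub]
        congr 1
        rw [← sub_mul]
        congr 1
        rw [← Complex.ofReal_sub]
        congr 1
        push_cast
        field_simp
        ring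
      have him : (((2 * Real.pi / N : ℝ) : ℂ) * Complex.I).im = 2 * Real.pi / N := by
        rw [Complex.mul_im]
        simp
      have h2N : 2 * Real.pi / N ≤ Real.pi := by
        rw [div_le_iff₀ hNpos]
        have : (2:ℝ) ≤ N := by rw [hN]; push_cast; linarith
        nlinarith [Real.pi_pos]
      have hposN : 0 < 2 * Real.pi / (N:ℝ) := by positivity
      rw [hee, Complex.log_exp (by rw [him]; linarith [Real.pi_pos]) (by rw [him]; exact h2N)]
    rw [Finset.sum_congr rfl hterm, Finset.sum_const, Finset.card_range, nsmul_eq_mul]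
    rw [← Complex.ofReal_natCast]
    rw [← mul_assoc, ← Complex.ofReal_mul]
    congr 2
    field_simp
  -- intermediate value argument
  set kf : ℝ → ℝ := fun s => (d s).im with hkf
  have hkf_cont : ContinuousOn kf (Icc (0:ℝ) 1) := Complex.continuous_im.comp_continuousOn hd_cont
  have hkf0 : kf 0 = 0 := by rw [hkf]; simp [hd0]
  have hkf1 : kf 1 = 2 * Real.pi := by
    rw [hkf]; simp only [hd1]
    rw [Complex.mul_im]
    simp
  have hsur := intermediate_value_Icc (zero_le_one) hkf_cont
  have hπmem : Real.pi ∈ Icc (kf 0) (kf 1) := by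
    rw [hkf0, hkf1]
    constructor
    · exact Real.pi_pos.le
    · nlinarith [Real.pi_pos]
  obtain ⟨s, hs, hks⟩ := hsur hπmem
  obtain ⟨m, hm⟩ := Complex.exp_eq_one_iff.1 (hexp s hs)
  have him : (d s).im = (m:ℝ) * (2 * Real.pi) := by
    rw [hm, Complex.mul_im]
    simp [Complex.mul_im, Complex.mul_re]
    try ring
  have hks2 : (d s).im = Real.pi := hks
  rw [him] at hks2
  have hks := hks2
  have h2m : (2 * m : ℝ) = 1 := by
    have hπ := Real.pi_pos
    have : ((m:ℝ) * 2 - 1) * Real.pi = 0 := by linarith [hks]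
    rcases mul_eq_zero.1 this with h | h
    · linarith
    · linarith
  have : ((2 * m : ℤ) : ℝ) = ((1:ℤ):ℝ) := by push_cast; linarith
  have := Int.cast_injective this
  omega

end LogMachinery



section Logs

lemma bc_exists_log_of_unbounded {X : Set ℂ} (hX : IsCompact X) {p : ℂ} (hp : p ∉ X)
    (hU : ¬ IsBounded (connectedComponentIn Xᶜ p)) :
    ∃ g : ℂ → ℂ, ContinuousOn g X ∧ ∀ x ∈ X, Complex.exp (g x) = x - p := by
  classical
  rcases X.eq_empty_or_nonempty with rfl | hXne
  · exact ⟨0, continuousOn_empty _, by simp⟩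
  set U := connectedComponentIn Xᶜ p with hUdef
  have hpc : p ∈ Xᶜ := hp
  have hUo : IsOpen U := hX.isClosed.isOpen_compl.connectedComponentIn
  have hpU : p ∈ U := mem_connectedComponentIn hpc
  have hUconn : IsConnected U := ⟨⟨p, hpU⟩, isPreconnected_connectedComponentIn⟩
  have hUX : U ⊆ Xᶜ := connectedComponentIn_subset _ _
  obtain ⟨r, hr⟩ := hX.isBounded.subset_closedBall 0
  set M : ℝ := max r 0 with hM
  have hM0 : 0 ≤ M := le_max_right _ _
  have hXM : ∀ x ∈ X, ‖x‖ ≤ M := by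
    intro x hx
    have := hr hx
    rw [mem_closedBall, dist_zero_right] at this
    exact this.trans (le_max_left _ _)
  have hq : ∃ q ∈ U, M < ‖q‖ := by
    by_contra hcon
    push_neg at hcon
    exact hU ((isBounded_closedBall (x := (0:ℂ)) (r := M)).subset
      (fun w hw => by rw [mem_closedBall, dist_zero_right]; exact hcon w hw))
  obtain ⟨q, hqU, hqM⟩ := hq
  have hq0 : q ≠ 0 := by
    intro h; rw [h, norm_zero] at hqM; linarith
  have hpc2 : IsPathConnected U := (hUo.isConnected_iff_isPathConnected).1 hUconn
  have hjoin : JoinedIn U p q := hpc2.joinedIn p hpU q hqU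
  set γ := hjoin.somePath with hγ
  have hγmem : ∀ t : ℝ, γ.extend t ∈ U := by
    intro t
    have h1 : γ.extend t = γ (projIcc 0 1 zero_le_one t) := rfl
    rw [h1]
    exact hjoin.somePath_mem _
  have hφcont : Continuous (fun t : ℝ => infDist (γ.extend t) X) :=
    (continuous_infDist_pt X).comp γ.continuous_extend
  obtain ⟨t₀, ht₀, hmin⟩ := isCompact_Icc.exists_isMinOn (⟨0, by simp⟩ : (Icc (0:ℝ) 1).Nonempty)
    hφcont.continuousOn
  set δ : ℝ := infDist (γ.extend t₀) X with hδdef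
  have hδpos : 0 < δ :=
    (hX.isClosed.notMem_iff_infDist_pos hXne).1 (fun h => hUX (hγmem t₀) h)
  have hdistX : ∀ t ∈ Icc (0:ℝ) 1, ∀ x ∈ X, δ ≤ dist x (γ.extend t) := by
    intro t ht x hx
    have h1 : δ ≤ infDist (γ.extend t) X := hmin ht
    have h2 : infDist (γ.extend t) X ≤ dist (γ.extend t) x := infDist_le_dist_of_mem hx
    rw [dist_comm]
    linarith
  obtain ⟨δ', hδ'pos, hδ'⟩ := Metric.uniformContinuousOn_iff.1
    (isCompact_Icc.uniformContinuousOn_of_continuous γ.continuous_extend.continuousOn) δ hδpos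
  obtain ⟨n₀, hn₀⟩ := exists_nat_one_div_lt hδ'pos
  set N : ℕ := n₀ + 1 with hN
  have hNpos : (0:ℝ) < N := by positivity
  have hNne : (N:ℝ) ≠ 0 := hNpos.ne'
  have hNlt : 1 / (N:ℝ) < δ' := by
    apply lt_of_le_of_lt _ hn₀
    apply one_div_le_one_div_of_le (by positivity)
    rw [hN]; push_cast; linarith
  set a : ℕ → ℂ := fun k => γ.extend ((k:ℝ)/N) with ha
  have hmemI : ∀ k : ℕ, k ≤ N → ((k:ℝ)/N) ∈ Icc (0:ℝ) 1 := by
    intro k hk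
    refine ⟨by positivity, ?_⟩
    rw [div_le_one hNpos]
    exact_mod_cast hk
  have ha0 : a 0 = p := by
    show γ.extend (((0:ℕ):ℝ)/N) = p
    rw [Nat.cast_zero, zero_div, Path.extend_zero]
  have haN : a N = q := by
    show γ.extend (((N:ℕ):ℝ)/N) = q
    rw [div_self hNne, Path.extend_one]
  have hne : ∀ x ∈ X, ∀ k : ℕ, k ≤ N → x - a k ≠ 0 := by
    intro x hx k hk
    have h1 : δ ≤ dist x (a k) := hdistX _ (hmemI k hk) x hx
    have h2 : (0:ℝ) < dist x (a k) := lt_of_lt_of_le hδpos h1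
    exact sub_ne_zero.2 (dist_pos.1 h2)
  have hnormge : ∀ x ∈ X, ∀ k : ℕ, k ≤ N → δ ≤ ‖x - a k‖ := by
    intro x hx k hk
    rw [← dist_eq_norm]
    exact hdistX _ (hmemI k hk) x hx
  have hclose : ∀ k : ℕ, k < N → ‖a (k+1) - a k‖ < δ := by
    intro k hk
    rw [← dist_eq_norm]
    apply hδ' _ (hmemI (k+1) hk) _ (hmemI k hk.le)
    rw [Real.dist_eq]
    have heq : ((k+1:ℕ):ℝ)/N - (k:ℝ)/N = 1/N := by push_cast; field_simp; ring
    rw [heq, abs_of_pos (by positivity)]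
    exact hNlt
  have hnq : (-q) ≠ 0 := neg_ne_zero.2 hq0
  have hslit2 : ∀ x ∈ X, (x - q)/(-q) ∈ Complex.slitPlane := by
    intro x hx
    apply bc_slit_of_close
    rw [div_sub_one hnq]
    have heq : (x - q) - (-q) = x := by ring
    rw [heq, norm_div, norm_neg]
    rw [div_lt_one (lt_of_le_of_lt (norm_nonneg x) (lt_of_le_of_lt (hXM x hx) hqM))]
    exact lt_of_le_of_lt (hXM x hx) hqM
  have hslitk : ∀ x ∈ X, ∀ k : ℕ, k < N → (x - a k)/(x - a (k+1)) ∈ Complex.slitPlane := by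
    intro x hx k hk
    apply bc_slit_of_close
    rw [div_sub_one (hne x hx (k+1) hk)]
    have heq : (x - a k) - (x - a (k+1)) = a (k+1) - a k := by ring
    rw [heq, norm_div]
    rw [div_lt_one (norm_pos_iff.2 (hne x hx (k+1) hk))]
    exact lt_of_lt_of_le (hclose k hk) (hnormge x hx (k+1) hk)
  refine ⟨fun x => Complex.log (-q) + Complex.log ((x - q)/(-q)) +
      ∑ k ∈ Finset.range N, Complex.log ((x - a k)/(x - a (k+1))), ?_, ?_⟩
  · apply ContinuousOn.add
    · apply ContinuousOn.add continuousOn_const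
      apply ContinuousOn.clog
      · exact (continuousOn_id.sub continuousOn_const).div_const _
      · exact hslit2
    · apply continuousOn_finset_sum
      intro k hk
      rw [Finset.mem_range] at hk
      apply ContinuousOn.clog
      · exact (continuousOn_id.sub continuousOn_const).div
          (continuousOn_id.sub continuousOn_const) (fun x hx => hne x hx (k+1) hk)
      · exact fun x hx => hslitk x hx k hk
  · intro x hx
    rw [Complex.exp_add, Complex.exp_add, Complex.exp_sum]
    rw [Complex.exp_log hnq, Complex.exp_log (div_ne_zero (by rw [← haN]; exact hne x hx N le_rfl) hnq)]
    have hterm : ∀ k ∈ Finset.range N,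
        Complex.exp (Complex.log ((x - a k)/(x - a (k+1)))) = (x - a k)/(x - a (k+1)) := by
      intro k hk
      rw [Finset.mem_range] at hk
      exact Complex.exp_log (div_ne_zero (hne x hx k hk.le) (hne x hx (k+1) hk))
    rw [Finset.prod_congr rfl hterm,
      bc_prod_telescope_down (fun k => x - a k) N (fun k hk => hne x hx k hk)]
    rw [ha0, haN]
    have hxq : x - q ≠ 0 := by rw [← haN]; exact hne x hx N le_rfl
    field_simp
    try ring

lemma bc_exists_log_union {A B : Set ℂ} (hA : IsClosed A) (hB : IsClosed B)
    (hAB : Disjoint A B) {p : ℂ}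
    {gA gB : ℂ → ℂ} (hgA : ContinuousOn gA A) (hgB : ContinuousOn gB B)
    (heA : ∀ x ∈ A, Complex.exp (gA x) = x - p) (heB : ∀ x ∈ B, Complex.exp (gB x) = x - p) :
    ∃ g : ℂ → ℂ, ContinuousOn g (A ∪ B) ∧ ∀ x ∈ A ∪ B, Complex.exp (g x) = x - p := by
  classical
  refine ⟨fun x => if x ∈ A then gA x else gB x, ?_, ?_⟩
  · intro x hx
    rcases hx with hxA | hxB
    · have hxnB : x ∉ B := fun h => (hAB.le_bot ⟨hxA, h⟩ : x ∈ (⊥ : Set ℂ)).elim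
      have hBc : Bᶜ ∈ 𝓝 x := hB.isOpen_compl.mem_nhds hxnB
      have hsub : (A ∪ B) ∩ Bᶜ ⊆ A := by
        rintro y ⟨hy1 | hy1, hy2⟩
        · exact hy1
        · exact absurd hy1 hy2
      have h1 : ContinuousWithinAt gA ((A ∪ B) ∩ Bᶜ) x := (hgA x hxA).mono hsub
      have h2 : ContinuousWithinAt (fun x => if x ∈ A then gA x else gB x)
          ((A ∪ B) ∩ Bᶜ) x := by
        apply h1.congr
        · intro y hy
          rw [if_pos (hsub hy)]
        · rw [if_pos hxA]
      show ContinuousWithinAt _ (A ∪ B) x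
      rw [ContinuousWithinAt, nhdsWithin_restrict' _ hBc]
      exact h2
    · have hxnA : x ∉ A := fun h => (hAB.le_bot ⟨h, hxB⟩ : x ∈ (⊥ : Set ℂ)).elim
      have hAc : Aᶜ ∈ 𝓝 x := hA.isOpen_compl.mem_nhds hxnA
      have hsub : (A ∪ B) ∩ Aᶜ ⊆ B := by
        rintro y ⟨hy1 | hy1, hy2⟩
        · exact absurd hy1 hy2
        · exact hy1
      have h1 : ContinuousWithinAt gB ((A ∪ B) ∩ Aᶜ) x := (hgB x hxB).mono hsub
      have h2 : ContinuousWithinAt (fun x => if x ∈ A then gA x else gB x)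
          ((A ∪ B) ∩ Aᶜ) x := by
        apply h1.congr
        · intro y hy
          rw [if_neg hy.2]
        · rw [if_neg hxnA]
      show ContinuousWithinAt _ (A ∪ B) x
      rw [ContinuousWithinAt, nhdsWithin_restrict' _ hAc]
      exact h2
  · intro x hx
    show Complex.exp (if x ∈ A then gA x else gB x) = x - p
    rcases hx with hxA | hxB
    · rw [if_pos hxA]; exact heA x hxA
    · have hxnA : x ∉ A := fun h => (hAB.le_bot ⟨h, hxB⟩ : x ∈ (⊥ : Set ℂ)).elim
      rw [if_neg hxnA]; exact heB x hxB

lemma bc_no_log_of_bounded {X : Set ℂ} (hX : IsCompact X) {p : ℂ} (hp : p ∉ X)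
    (hb : IsBounded (connectedComponentIn Xᶜ p))
    {g : ℂ → ℂ} (hg : ContinuousOn g X) (hexp : ∀ x ∈ X, Complex.exp (g x) = x - p) :
    False := by
  classical
  set V := connectedComponentIn Xᶜ p with hVdef
  have hpc : p ∈ Xᶜ := hp
  have hpV : p ∈ V := mem_connectedComponentIn hpc
  have hVo : IsOpen V := hX.isClosed.isOpen_compl.connectedComponentIn
  have hfr : frontier V ⊆ X := bc_frontier_cci hX.isClosed p
  -- Tietze extension of g
  obtain ⟨G, hG⟩ := ContinuousMap.exists_restrict_eq (Y := ℂ) hX.isClosed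
    ⟨X.restrict g, hg.restrict⟩
  have hGX : ∀ x ∈ X, G x = g x := by
    intro x hx
    have := congrFun (congrArg DFunLike.coe hG) ⟨x, hx⟩
    exact this
  set ψ : ℂ → ℂ := V.piecewise (fun z => p + Complex.exp (G z)) id with hψ
  have hψcont : Continuous ψ := by
    apply Continuous.piecewise
    · intro a ha
      have haX : a ∈ X := hfr ha
      show p + Complex.exp (G a) = a
      rw [hGX a haX, hexp a haX]
      ring
    · exact continuous_const.add (Complex.continuous_exp.comp G.continuous)
    · exact continuous_id
  have hψmem : ∀ z ∈ V, ψ z = p + Complex.exp (G z) :=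
    fun z hz => Set.piecewise_eq_of_mem _ _ _ hz
  have hψid : ∀ z ∉ V, ψ z = z := fun z hz => Set.piecewise_eq_of_notMem _ _ _ hz
  have hψne : ∀ z : ℂ, ψ z ≠ p := by
    intro z
    by_cases hz : z ∈ V
    · rw [hψmem z hz]
      intro h
      have h2 : Complex.exp (G z) = 0 := by linear_combination h
      exact Complex.exp_ne_zero _ h2
    · rw [hψid z hz]
      intro h
      rw [h] at hz
      exact hz hpV
  obtain ⟨r, hrV⟩ := hb.subset_closedBall p
  set R : ℝ := max r 0 + 1 with hR
  have hRpos : 0 < R := by positivity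
  have hout : ∀ z : ℂ, R ≤ dist z p → z ∉ V := by
    intro z hz hmem
    have := hrV hmem
    rw [mem_closedBall] at this
    have h1 : r ≤ max r 0 := le_max_left _ _
    linarith
  apply bc_no_retraction (F := fun z => ψ (p + z) - p)
    ((hψcont.comp (continuous_const.add continuous_id)).sub continuous_const) hRpos
  · intro z hz
    have hnm : R ≤ dist (p + z) p := by
      rw [dist_eq_norm]
      have h1 : p + z - p = z := by ring
      rw [h1, hz]
    rw [hψid _ (hout _ hnm)]
    ring
  · intro z _ h
    rw [sub_eq_zero] at h
    exact hψne (p + z) h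

lemma bc_janiszewski {A B : Set ℂ} (hA : IsCompact A) (hB : IsCompact B)
    (hAB : Disjoint A B) {z : ℂ} (hzA : z ∉ A) (hzB : z ∉ B)
    (huA : ¬ IsBounded (connectedComponentIn Aᶜ z))
    (huB : ¬ IsBounded (connectedComponentIn Bᶜ z))
    (hbnd : IsBounded (connectedComponentIn (A ∪ B)ᶜ z)) : False := by
  obtain ⟨gA, hgA, heA⟩ := bc_exists_log_of_unbounded hA hzA huA
  obtain ⟨gB, hgB, heB⟩ := bc_exists_log_of_unbounded hB hzB huB
  obtain ⟨g, hg, he⟩ := bc_exists_log_union hA.isClosed hB.isClosed hAB hgA hgB heA heB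
  exact bc_no_log_of_bounded (hA.union hB) (fun h => h.elim hzA hzB) hbnd hg he

end Logs

end BranchedCoverAux

theorem hull_of_pullback_is_pullback_of_hull
    (f τ : ℂ → ℂ) (c : ℂ)
    (hf : Continuous f) (hopen : IsOpenMap f)
    (hperfect : ∀ K : Set ℂ, IsCompact K → IsCompact (f ⁻¹' K))
    (hτ : Continuous τ) (hττ : ∀ x, τ (τ x) = x) (hfτ : ∀ x, f (τ x) = f x)
    (hfib : ∀ x y, f x = f y → y = x ∨ y = τ x)
    (hc : τ c = c) (hcuniq : ∀ x, τ x = x → x = c)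
    (hconf : Confluent f)
    (horiented : ∀ Z : Set ℂ, IsContinuum Z → f '' hullC Z ⊆ hullC (f '' Z))
    (Y C : Set ℂ) (hY : IsContinuum Y) (hC : IsComponentOf C (f ⁻¹' Y)) :
    IsComponentOf (hullC C) (f ⁻¹' hullC Y) ∧
    f '' hullC C = hullC Y ∧
    (IsConnected Yᶜ → IsConnected Cᶜ) := by
  classical
  obtain ⟨hYcomp, hYconn⟩ := hY
  obtain ⟨x₀, hx₀, hCeq⟩ := hC
  have hYcl : IsClosed Y := hYcomp.isClosed
  have hfYcomp : IsCompact (f ⁻¹' Y) := hperfect Y hYcomp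
  have hCsub : C ⊆ f ⁻¹' Y := hCeq ▸ connectedComponentIn_subset _ _
  have hx₀C : x₀ ∈ C := hCeq ▸ mem_connectedComponentIn hx₀
  have hCconn : IsPreconnected C := hCeq ▸ isPreconnected_connectedComponentIn
  have hCcl : IsClosed C := by
    have h1 : closure C ⊆ f ⁻¹' Y := closure_minimal hCsub hfYcomp.isClosed
    have h2 : closure C ⊆ connectedComponentIn (f ⁻¹' Y) x₀ :=
      hCconn.closure.subset_connectedComponentIn (subset_closure hx₀C) h1
    rw [← hCeq] at h2
    exact isClosed_of_closure_subset h2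
  have hCcomp : IsCompact C := hfYcomp.of_isClosed_subset hCcl hCsub
  have hfC : f '' C = Y := hconf Y C ⟨hYcomp, hYconn⟩ ⟨x₀, hx₀, hCeq⟩
  have hCne : C.Nonempty := ⟨x₀, hx₀C⟩
  have htCconn : IsPreconnected (τ '' C) := hCconn.image τ hτ.continuousOn
  have htCcomp : IsCompact (τ '' C) := hCcomp.image hτ
  have hpre : f ⁻¹' Y = C ∪ τ '' C := by
    apply subset_antisymm
    · intro x hxm
      have hfx : f x ∈ Y := hxm
      rw [← hfC] at hfx
      rcases hfx with ⟨y, hyC, hyx⟩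
      rcases hfib y x hyx with h | h
      · left; rw [h]; exact hyC
      · right; rw [h]; exact ⟨y, hyC, rfl⟩
    · rintro x (hx | ⟨y, hy, rfl⟩)
      · exact hCsub hx
      · show f (τ y) ∈ Y
        rw [hfτ]
        exact hCsub hy
  have hFinv : τ '' (f ⁻¹' Y) = f ⁻¹' Y := by
    ext w
    rw [bc_invol_mem_image hτ hττ]
    show τ w ∈ f ⁻¹' Y ↔ w ∈ f ⁻¹' Y
    simp only [mem_preimage, hfτ]
  have htc : τ '' C = connectedComponentIn (f ⁻¹' Y) (τ x₀) := by
    rw [hCeq, bc_invol_cci hτ hττ, hFinv]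
  have hsurj : Function.Surjective f := bc_f_surj hf hopen hperfect
  have hmaster : f ⁻¹' (hullC Y) = hullC (f ⁻¹' Y) := bc_preimage_hullC hf hopen hperfect hYcl
  have hx₀H : x₀ ∈ f ⁻¹' (hullC Y) := by
    show f x₀ ∈ hullC Y
    exact bc_subset_hullC Y hx₀
  have hhCconn : IsConnected (hullC C) := bc_isConnected_hullC hCcomp ⟨hCne, hCconn⟩
  have hx₀hC : x₀ ∈ hullC C := bc_subset_hullC C hx₀C
  -- Goal 3, proved independently of the case analysis
  have goal3 : IsConnected Yᶜ → IsConnected Cᶜ := by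
    intro hYco
    have hhY : hullC Y = Y := bc_hullC_eq_self_of_compl_connected hYcomp.isBounded hYco
    have hsub2 : hullC C ⊆ f ⁻¹' Y := by
      calc hullC C ⊆ hullC (f ⁻¹' Y) := bc_hullC_mono hCsub
        _ = f ⁻¹' (hullC Y) := hmaster.symm
        _ = f ⁻¹' Y := by rw [hhY]
    apply bc_isConnected_compl_of_unbounded hCcomp.isBounded
    intro z hzC hbV
    have hzc : z ∈ Cᶜ := hzC
    have hzV : z ∈ connectedComponentIn Cᶜ z := mem_connectedComponentIn hzc
    have hVsub : connectedComponentIn Cᶜ z ⊆ τ '' C := by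
      intro w hw
      have hwh : w ∈ hullC C := bc_cci_subset_hullC hbV hw
      have hw2 := hsub2 hwh
      rw [hpre] at hw2
      rcases hw2 with h | h
      · exact absurd h (connectedComponentIn_subset Cᶜ z hw)
      · exact h
    have hzt : z ∈ τ '' C := hVsub hzV
    have hCCne : τ '' C ≠ C := by
      intro h
      rw [h] at hzt
      exact hzC hzt
    have hdisj : Disjoint C (τ '' C) := by
      rw [Set.disjoint_left]
      intro a haC hat
      apply hCCne
      have h1 : connectedComponentIn (f ⁻¹' Y) x₀ = connectedComponentIn (f ⁻¹' Y) a :=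
        connectedComponentIn_eq (by rw [← hCeq]; exact haC)
      have h2 : connectedComponentIn (f ⁻¹' Y) (τ x₀) = connectedComponentIn (f ⁻¹' Y) a :=
        connectedComponentIn_eq (by rw [← htc]; exact hat)
      rw [htc, h2, ← h1, ← hCeq]
    have htsub : τ '' C ⊆ connectedComponentIn Cᶜ z := by
      apply htCconn.subset_connectedComponentIn hzt
      intro w hw
      exact disjoint_right.1 hdisj hw
    have hVeq : connectedComponentIn Cᶜ z = τ '' C := subset_antisymm hVsub htsub
    have hopenV : IsOpen (connectedComponentIn Cᶜ z) := hCcl.isOpen_compl.connectedComponentIn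
    have hclop : IsClopen (τ '' C) := ⟨htCcomp.isClosed, hVeq ▸ hopenV⟩
    have huniv := hclop.eq_univ ⟨z, hzt⟩
    have hbu : IsBounded (univ : Set ℂ) := huniv ▸ htCcomp.isBounded
    exact bc_univ_unbounded hbu
  -- Case analysis for goals 1 and 2
  have hHhull : f ⁻¹' (hullC Y) = hullC (C ∪ τ '' C) := by rw [hmaster, hpre]
  have concl : f ⁻¹' (hullC Y) = hullC C →
      IsComponentOf (hullC C) (f ⁻¹' hullC Y) ∧ f '' hullC C = hullC Y := by
    intro hEq
    constructor
    · refine ⟨x₀, hx₀H, ?_⟩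
      rw [hEq, bc_comp_eq_self hhCconn.isPreconnected hx₀hC]
    · rw [← hEq, image_preimage_eq _ hsurj]
  by_cases hcap : (C ∩ τ '' C).Nonempty
  · obtain ⟨a, haC, hat⟩ := hcap
    have hCC : τ '' C = C := by
      have h1 : connectedComponentIn (f ⁻¹' Y) x₀ = connectedComponentIn (f ⁻¹' Y) a :=
        connectedComponentIn_eq (by rw [← hCeq]; exact haC)
      have h2 : connectedComponentIn (f ⁻¹' Y) (τ x₀) = connectedComponentIn (f ⁻¹' Y) a :=
        connectedComponentIn_eq (by rw [← htc]; exact hat)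
      rw [htc, h2, ← h1, ← hCeq]
    have hEq : f ⁻¹' (hullC Y) = hullC C := by rw [hHhull, hCC, union_self]
    exact ⟨(concl hEq).1, (concl hEq).2, goal3⟩
  · have hdisj : Disjoint C (τ '' C) :=
      Set.disjoint_iff_inter_eq_empty.2 (Set.not_nonempty_iff_eq_empty.1 hcap)
    have hτx₀ : τ x₀ ∈ τ '' C := ⟨x₀, hx₀C, rfl⟩
    have htCsubc : τ '' C ⊆ Cᶜ := fun w hw => disjoint_right.1 hdisj hw
    have htCT : τ '' C ⊆ connectedComponentIn Cᶜ (τ x₀) :=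
      htCconn.subset_connectedComponentIn hτx₀ htCsubc
    by_cases hTb : IsBounded (connectedComponentIn Cᶜ (τ x₀))
    · -- Case ii : τ '' C lies in a bounded complementary component of C
      have h1 : τ '' C ⊆ hullC C := fun w hw => bc_cci_subset_hullC hTb (htCT hw)
      have hEq : f ⁻¹' (hullC Y) = hullC C := by
        rw [hHhull]
        apply subset_antisymm
        · have hsub3 : C ∪ τ '' C ⊆ hullC C := union_subset (bc_subset_hullC C) h1
          calc hullC (C ∪ τ '' C) ⊆ hullC (hullC C) := bc_hullC_mono hsub3
            _ = hullC C := bc_hullC_idem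
        · exact bc_hullC_mono subset_union_left
      exact ⟨(concl hEq).1, (concl hEq).2, goal3⟩
    · -- Case i : τ '' C lies in the unbounded complementary component of C
      have htCne : (τ '' C).Nonempty := hCne.image τ
      have hBA : hullC (τ '' C) = τ '' hullC C := (bc_invol_hullC hτ hττ C).symm
      have haux1 : ∀ w ∈ τ '' C, w ∉ hullC C := by
        intro w hw hwA
        have hwT : w ∈ connectedComponentIn Cᶜ (τ x₀) := htCT hw
        have heq2 : connectedComponentIn Cᶜ (τ x₀) = connectedComponentIn Cᶜ w :=
          connectedComponentIn_eq hwT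
        have hbw : IsBounded (connectedComponentIn Cᶜ w) := bc_mem_hullC.1 hwA
        rw [← heq2] at hbw
        exact hTb hbw
      have haux2 : ∀ x ∈ C, x ∉ hullC (τ '' C) := by
        intro x hxC hxB
        have h1 : τ x ∈ τ '' hullC (τ '' C) := ⟨x, hxB, rfl⟩
        have h2 : τ '' hullC (τ '' C) = hullC C := by
          rw [hBA, bc_invol_image_image hτ hττ]
        exact haux1 (τ x) ⟨x, hxC, rfl⟩ (h2 ▸ h1)
      have hABdisj : Disjoint (hullC C) (hullC (τ '' C)) := by
        rw [disjoint_left]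
        intro z hzA hzB
        have hzC : z ∉ C := fun h => haux2 z h hzB
        have hztC : z ∉ τ '' C := fun h => haux1 z h hzA
        have hbV : IsBounded (connectedComponentIn Cᶜ z) := bc_mem_hullC.1 hzA
        have hbV' : IsBounded (connectedComponentIn (τ '' C)ᶜ z) := bc_mem_hullC.1 hzB
        have hzV : z ∈ connectedComponentIn Cᶜ z := mem_connectedComponentIn hzC
        have hzV' : z ∈ connectedComponentIn (τ '' C)ᶜ z := mem_connectedComponentIn hztC
        have hVtC : connectedComponentIn Cᶜ z ⊆ (τ '' C)ᶜ := by
          intro w hw hwt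
          have h1 : connectedComponentIn Cᶜ z = connectedComponentIn Cᶜ w :=
            connectedComponentIn_eq hw
          have h2 : connectedComponentIn Cᶜ (τ x₀) = connectedComponentIn Cᶜ w :=
            connectedComponentIn_eq (htCT hwt)
          rw [h1, ← h2] at hbV
          exact hTb hbV
        have hVV' : connectedComponentIn Cᶜ z ⊆ connectedComponentIn (τ '' C)ᶜ z :=
          isPreconnected_connectedComponentIn.subset_connectedComponentIn hzV hVtC
        by_cases hV'C : (connectedComponentIn (τ '' C)ᶜ z ∩ C).Nonempty
        · obtain ⟨w, hwV', hwC⟩ := hV'C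
          have hCV' : C ⊆ connectedComponentIn (τ '' C)ᶜ z := by
            rw [connectedComponentIn_eq hwV']
            exact hCconn.subset_connectedComponentIn hwC
              (fun y hy => disjoint_left.1 hdisj hy)
          have hx₀B : x₀ ∈ hullC (τ '' C) := bc_cci_subset_hullC hbV' (hCV' hx₀C)
          exact haux2 x₀ hx₀C hx₀B
        · have hV'su : connectedComponentIn (τ '' C)ᶜ z ⊆ Cᶜ := by
            intro w hw hwC
            exact hV'C ⟨w, hw, hwC⟩
          have hV'V : connectedComponentIn (τ '' C)ᶜ z ⊆ connectedComponentIn Cᶜ z :=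
            isPreconnected_connectedComponentIn.subset_connectedComponentIn hzV' hV'su
          have hVeq : connectedComponentIn Cᶜ z = connectedComponentIn (τ '' C)ᶜ z :=
            subset_antisymm hVV' hV'V
          obtain ⟨y, hy⟩ := bc_frontier_nonempty hCcl.isOpen_compl.connectedComponentIn
            ⟨z, hzV⟩ hbV
          have hyC : y ∈ C := bc_frontier_cci hCcl z hy
          have hy2 : y ∈ frontier (connectedComponentIn (τ '' C)ᶜ z) := hVeq ▸ hy
          have hytC : y ∈ τ '' C := bc_frontier_cci htCcomp.isClosed z hy2
          exact absurd hytC (disjoint_left.1 hdisj hyC)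
      have hHAB : f ⁻¹' (hullC Y) = hullC C ∪ hullC (τ '' C) := by
        rw [hHhull]
        apply subset_antisymm
        · intro z hz
          by_contra hzAB
          have hzA : z ∉ hullC C := fun h => hzAB (Or.inl h)
          have hzB : z ∉ hullC (τ '' C) := fun h => hzAB (Or.inr h)
          have hzC : z ∉ C := fun h => hzA (bc_subset_hullC C h)
          have hztC : z ∉ τ '' C := fun h => hzB (bc_subset_hullC _ h)
          exact bc_janiszewski hCcomp htCcomp hdisj hzC hztC
            (fun h => hzA (bc_mem_hullC.2 h)) (fun h => hzB (bc_mem_hullC.2 h))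
            (bc_mem_hullC.1 hz)
        · exact union_subset (bc_hullC_mono subset_union_left)
            (bc_hullC_mono subset_union_right)
      have hAcomp2 : IsCompact (hullC C) := Metric.isCompact_of_isClosed_isBounded
        (bc_isClosed_hullC hCcl) (bc_isBounded_hullC hCcomp.isBounded)
      have hBcomp2 : IsCompact (hullC (τ '' C)) := Metric.isCompact_of_isClosed_isBounded
        (bc_isClosed_hullC htCcomp.isClosed) (bc_isBounded_hullC htCcomp.isBounded)
      have hx₀HH : x₀ ∈ f ⁻¹' (hullC Y) := hx₀H
      have hcciA : connectedComponentIn (f ⁻¹' (hullC Y)) x₀ = hullC C := by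
        apply subset_antisymm
        · obtain ⟨u, v, huo, hvo, hAu, hBv, huv⟩ :=
            SeparatedNhds.of_isCompact_isCompact hAcomp2 hBcomp2 hABdisj
          have hsubuv : connectedComponentIn (f ⁻¹' (hullC Y)) x₀ ⊆ u ∪ v := by
            intro w hw
            have := connectedComponentIn_subset (f ⁻¹' (hullC Y)) x₀ hw
            rw [hHAB] at this
            rcases this with h | h
            · exact Or.inl (hAu h)
            · exact Or.inr (hBv h)
          have hsu : connectedComponentIn (f ⁻¹' (hullC Y)) x₀ ⊆ u :=
            IsPreconnected.subset_left_of_subset_union huo hvo huv hsubuv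
              ⟨x₀, mem_connectedComponentIn hx₀HH, hAu hx₀hC⟩
              isPreconnected_connectedComponentIn
          intro w hw
          have hw2 := connectedComponentIn_subset (f ⁻¹' (hullC Y)) x₀ hw
          rw [hHAB] at hw2
          rcases hw2 with h | h
          · exact h
          · exact absurd (hsu hw) (fun hu2 => (disjoint_left.1 huv hu2) (hBv h))
        · exact hhCconn.isPreconnected.subset_connectedComponentIn hx₀hC
            (by rw [hHAB]; exact subset_union_left)
      refine ⟨⟨x₀, hx₀H, hcciA.symm⟩, ?_, goal3⟩
      have himg : f '' (f ⁻¹' (hullC Y)) = hullC Y := image_preimage_eq _ hsurj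
      have hfB : f '' hullC (τ '' C) = f '' hullC C := by
        rw [hBA, ← Set.image_comp]
        congr 1
        ext x
        simp [Function.comp, hfτ]
      rw [hHAB, image_union, hfB, union_self] at himg
      exact himg
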